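/- Let (X,d,m) be a metric measure space such that for every μ_0, μ_1 ∈ P_2(X) with μ_0 absolutely continuous with respect to m, there exists a unique optimal geodesic plan π ∈ OptGeo(μ_0,μ_1), and moreover this π is concentrated on a Borel set Γ ⊂ Geo(X) on which the evaluation map e_0 : Γ → X is injective. Then every bijective isometry f of X with f ≠ id satisfies m(Fix(f)) = 0. -/

import Mathlib

open Metric MeasureTheory ENNReal Set

noncomputable section

/-- A (constant-speed, globally minimizing) geodesic parametrized by `[0,1]`. -/
def IsGeodesic {X : Type*} [MetricSpace X] (γ : C(unitInterval, X)) : Prop :=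
  ∀ s t : unitInterval, dist (γ s) (γ t) = |(t : ℝ) - (s : ℝ)| * dist (γ 0) (γ 1)

/-- The space `Geo(X)` of geodesics of `X`, with the topology of uniform convergence
(the compact-open topology on `C([0,1], X)`). -/
abbrev Geo (X : Type*) [MetricSpace X] : Type _ := {γ : C(unitInterval, X) // IsGeodesic γ}

instance geoMeasurableSpace {X : Type*} [MetricSpace X] : MeasurableSpace (Geo X) :=
  borel (Geo X)

instance geoBorelSpace {X : Type*} [MetricSpace X] : BorelSpace (Geo X) := ⟨rfl⟩

/-- Evaluation of a geodesic at time `t`. -/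
def geoEval {X : Type*} [MetricSpace X] (t : unitInterval) (γ : Geo X) : X := γ.1 t

/-- The length of a geodesic. -/
def geoLen {X : Type*} [MetricSpace X] (γ : Geo X) : ℝ := dist (γ.1 0) (γ.1 1)

/-- A Borel probability measure has finite second moment. -/
def FiniteSecondMoment {X : Type*} [MetricSpace X] [MeasurableSpace X]
    (μ : Measure X) : Prop :=
  ∃ x₀ : X, ∫⁻ x, edist x x₀ ^ 2 ∂μ ≠ ∞

/-- `pl` is a coupling of `μ₀` and `μ₁`. -/
def IsCoupling {X : Type*} [MetricSpace X] [MeasurableSpace X]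
    (pl : Measure (X × X)) (μ₀ μ₁ : Measure X) : Prop :=
  pl.map Prod.fst = μ₀ ∧ pl.map Prod.snd = μ₁

/-- `pl` is an optimal plan between `μ₀` and `μ₁` for the quadratic cost. -/
def IsOptimalPlan {X : Type*} [MetricSpace X] [MeasurableSpace X]
    (pl : Measure (X × X)) (μ₀ μ₁ : Measure X) : Prop :=
  IsProbabilityMeasure pl ∧ IsCoupling pl μ₀ μ₁ ∧
    ∀ pl' : Measure (X × X), IsProbabilityMeasure pl' → IsCoupling pl' μ₀ μ₁ →
      ∫⁻ p, edist p.1 p.2 ^ 2 ∂pl ≤ ∫⁻ p, edist p.1 p.2 ^ 2 ∂pl'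

/-- `π ∈ OptGeo(μ₀, μ₁)` : an optimal geodesic plan between `μ₀` and `μ₁`. -/
def IsOptGeoPlan {X : Type*} [MetricSpace X] [MeasurableSpace X]
    (pln : Measure (Geo X)) (μ₀ μ₁ : Measure X) : Prop :=
  IsProbabilityMeasure pln ∧
    IsOptimalPlan (pln.map (fun γ => (geoEval 0 γ, geoEval 1 γ))) μ₀ μ₁

end

section Aux
variable {X : Type*} [MetricSpace X]

lemma continuous_geoEval (t : unitInterval) : Continuous (geoEval (X := X) t) :=
  (continuous_eval_const t).comp continuous_subtype_val

/-- Post-composition of a geodesic with an isometry. -/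
noncomputable def geoMap (f : X ≃ᵢ X) (γ : Geo X) : Geo X :=
  ⟨ContinuousMap.comp ⟨f, f.continuous⟩ γ.1, by
    intro s t
    simp only [ContinuousMap.comp_apply, ContinuousMap.coe_mk]
    rw [f.dist_eq, f.dist_eq]
    exact γ.2 s t⟩

lemma continuous_geoMap (f : X ≃ᵢ X) : Continuous (geoMap f) :=
  Continuous.subtype_mk ((ContinuousMap.continuous_postcomp _).comp continuous_subtype_val) _

lemma geoEval_geoMap (f : X ≃ᵢ X) (t : unitInterval) (γ : Geo X) :
    geoEval t (geoMap f γ) = f (geoEval t γ) := rfl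

variable [MeasurableSpace X] [BorelSpace X]

lemma measurable_geoEval (t : unitInterval) : Measurable (geoEval (X := X) t) :=
  (continuous_geoEval t).measurable

lemma measurable_geoPair :
    Measurable (fun γ : Geo X => (geoEval 0 γ, geoEval 1 γ)) :=
  (measurable_geoEval 0).prodMk (measurable_geoEval 1)

/-- The cost of any coupling between a measure concentrated on the fixed point
set of `f` and `½δ_y + ½δ_{f y}` is `∫ d(x,y)² dμ₀(x)`. -/
lemma coupling_cost_const (f : X ≃ᵢ X) (μ₀ : Measure X) (y : X)
    (hconc : μ₀ {x : X | f x = x}ᶜ = 0)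
    (pl : Measure (X × X))
    (hpl : IsCoupling pl μ₀
      ((1/2 : ℝ≥0∞) • Measure.dirac y + (1/2 : ℝ≥0∞) • Measure.dirac (f y))) :
    ∫⁻ p, edist p.1 p.2 ^ 2 ∂pl = ∫⁻ x, edist x y ^ 2 ∂μ₀ := by
  have hF : MeasurableSet {x : X | f x = x} :=
    (isClosed_eq f.continuous continuous_id).measurableSet
  have hYZ : MeasurableSet ({y, f y} : Set X) :=
    (Set.Finite.isClosed (by simp)).measurableSet
  -- a.e. point of pl has first coord fixed and second coord in {y, f y}
  have h1 : pl (Prod.fst ⁻¹' {x : X | f x = x}ᶜ) = 0 := by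
    rw [← Measure.map_apply measurable_fst hF.compl, hpl.1]; exact hconc
  have h2 : pl (Prod.snd ⁻¹' ({y, f y} : Set X)ᶜ) = 0 := by
    rw [← Measure.map_apply measurable_snd hYZ.compl, hpl.2]
    simp [Measure.dirac_apply' _ hYZ.compl]
  have hae : ∀ᵐ p ∂pl, edist p.1 p.2 ^ 2 = edist p.1 y ^ 2 := by
    have hae1 : ∀ᵐ p ∂pl, f p.1 = p.1 := by
      rw [ae_iff]; exact h1
    have hae2 : ∀ᵐ p ∂pl, p.2 ∈ ({y, f y} : Set X) := by
      rw [ae_iff]; exact h2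
    filter_upwards [hae1, hae2] with p hp1 hp2
    rcases hp2 with h | h
    · rw [h]
    · rw [mem_singleton_iff] at h
      rw [h]
      conv_lhs => rw [← hp1]
      rw [f.isometry.edist_eq]
  rw [lintegral_congr_ae hae, ← hpl.1, lintegral_map (by fun_prop) measurable_fst]

end Aux

/-- If between any `μ₀ ≪ m` and any `μ₁` in `P₂(X)` there is a unique
optimal geodesic plan, concentrated on a Borel set of geodesics on which `e₀` is
injective, then every nontrivial isometry has fixed point set of `m`-measure zero. -/
theorem fixed_points_null_of_unique_optimal_plans
    {X : Type*} [MetricSpace X] [TopologicalSpace.SeparableSpace X] [CompleteSpace X]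
    [MeasurableSpace X] [BorelSpace X]
    (m : Measure X) (hm0 : m ≠ 0)
    (hfin : ∀ s : Set X, Bornology.IsBounded s → m s ≠ ∞)
    (hsupp : ∀ U : Set X, IsOpen U → U.Nonempty → 0 < m U)
    (H : ∀ μ₀ μ₁ : Measure X, IsProbabilityMeasure μ₀ → IsProbabilityMeasure μ₁ →
      FiniteSecondMoment μ₀ → FiniteSecondMoment μ₁ → μ₀ ≪ m →
      ∃ pln : Measure (Geo X), IsOptGeoPlan pln μ₀ μ₁ ∧
        (∀ pln' : Measure (Geo X), IsOptGeoPlan pln' μ₀ μ₁ → pln' = pln) ∧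
        ∃ Γ : Set (Geo X), MeasurableSet Γ ∧ pln Γᶜ = 0 ∧
          Set.InjOn (geoEval 0) Γ)
    (f : X ≃ᵢ X) (hf : f ≠ 1) :
    m {x : X | f x = x} = 0 := by
  by_contra hpos
  set F : Set X := {x : X | f x = x} with hFdef
  have hFmeas : MeasurableSet F := (isClosed_eq f.continuous continuous_id).measurableSet
  have hfmeas : Measurable (f : X → X) := f.continuous.measurable
  -- a point not fixed by f
  obtain ⟨y, hy⟩ : ∃ y : X, f y ≠ y := by
    by_contra h
    push_neg at h
    exact hf (IsometryEquiv.ext h)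
  -- a bounded piece of F with positive finite measure
  obtain ⟨x₀, -⟩ : F.Nonempty := nonempty_of_measure_ne_zero hpos
  have hFcover : F = ⋃ n : ℕ, F ∩ Metric.ball x₀ n := by
    ext x; simp only [mem_iUnion, mem_inter_iff, Metric.mem_ball]
    constructor
    · intro hx
      obtain ⟨n, hn⟩ := exists_nat_gt (dist x x₀)
      exact ⟨n, hx, hn⟩
    · rintro ⟨n, hn, -⟩; exact hn
  obtain ⟨n, hSn⟩ : ∃ n : ℕ, m (F ∩ Metric.ball x₀ n) ≠ 0 := by
    by_contra h
    push_neg at h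
    exact hpos (by rw [hFcover]; exact measure_iUnion_null h)
  set S : Set X := F ∩ Metric.ball x₀ n with hSdef
  have hSbdd : Bornology.IsBounded S := Metric.isBounded_ball.subset inter_subset_right
  have hSfin : m S ≠ ∞ := hfin S hSbdd
  have hSmeas : MeasurableSet S := hFmeas.inter measurableSet_ball
  -- the measures
  set μ₀ : Measure X := (m S)⁻¹ • m.restrict S with hμ₀def
  have hμ₀prob : IsProbabilityMeasure μ₀ := by
    constructor
    rw [hμ₀def, Measure.smul_apply, Measure.restrict_apply_univ, smul_eq_mul]
    exact ENNReal.inv_mul_cancel hSn hSfin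
  have hμ₀ac : μ₀ ≪ m := by
    intro s hs
    have h1 : m (s ∩ S) = 0 := measure_mono_null inter_subset_left hs
    rw [hμ₀def, Measure.smul_apply, Measure.restrict_apply' hSmeas, h1, smul_eq_mul, mul_zero]
  have hμ₀conc : μ₀ Fᶜ = 0 := by
    rw [hμ₀def, Measure.smul_apply, Measure.restrict_apply hFmeas.compl]
    have : Fᶜ ∩ S = ∅ := by
      rw [hSdef, eq_empty_iff_forall_notMem]
      rintro x ⟨hx1, hx2, -⟩
      exact hx1 hx2
    simp [this]
  have hμ₀mom : FiniteSecondMoment μ₀ := by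
    refine ⟨x₀, ?_⟩
    rw [hμ₀def]
    simp only [lintegral_smul_measure]
    have hb : ∫⁻ x in S, edist x x₀ ^ 2 ∂m ≤ (ENNReal.ofReal n) ^ 2 * m S := by
      rw [← setLIntegral_const S ((ENNReal.ofReal n) ^ 2)]
      refine setLIntegral_mono_ae (by fun_prop) ?_
      filter_upwards with x hx
      have : dist x x₀ < n := hx.2
      gcongr
      rw [edist_dist]
      exact ENNReal.ofReal_le_ofReal this.le
    exact ENNReal.mul_ne_top (ENNReal.inv_ne_top.mpr hSn)
      (ne_top_of_le_ne_top
        (ENNReal.mul_ne_top (ENNReal.pow_ne_top ENNReal.ofReal_ne_top) hSfin) hb)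
  set μ₁ : Measure X :=
    (1/2 : ℝ≥0∞) • Measure.dirac y + (1/2 : ℝ≥0∞) • Measure.dirac (f y) with hμ₁def
  have hμ₁prob : IsProbabilityMeasure μ₁ := by
    constructor
    simp [hμ₁def, ENNReal.inv_two_add_inv_two]
  have hdiracmom : ∀ z : X, FiniteSecondMoment (Measure.dirac z) := by
    intro z
    refine ⟨z, ?_⟩
    rw [lintegral_dirac' _ (by fun_prop)]
    simp
  have hμ₁mom : FiniteSecondMoment μ₁ := by
    refine ⟨y, ?_⟩
    rw [hμ₁def]
    simp only [lintegral_add_measure, lintegral_smul_measure]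
    rw [lintegral_dirac' _ (by fun_prop), lintegral_dirac' _ (by fun_prop)]
    simp only [edist_self]
    have : (0 : ℝ≥0∞) ^ 2 = 0 := by norm_num
    rw [this, smul_zero, zero_add]
    exact ENNReal.mul_ne_top (by norm_num) (ENNReal.pow_ne_top (edist_ne_top _ _))
  -- get the optimal geodesic plan to δ_y
  obtain ⟨πy, hπy, -, -⟩ :=
    H μ₀ (Measure.dirac y) hμ₀prob (by infer_instance) hμ₀mom (hdiracmom y) hμ₀ac
  obtain ⟨hπyprob, hπyplanprob, hπycpl, -⟩ := hπy
  -- get the unique optimal geodesic plan to μ₁ and its injectivity set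
  obtain ⟨pln, hpln, huniq, Γ, hΓmeas, hΓnull, hΓinj⟩ :=
    H μ₀ μ₁ hμ₀prob hμ₁prob hμ₀mom hμ₁mom hμ₀ac
  -- the candidate plan: ½ πy + ½ (geoMap f)_* πy
  set Φ : Geo X → Geo X := geoMap f with hΦdef
  have hΦmeas : Measurable Φ := (continuous_geoMap f).measurable
  set π' : Measure (Geo X) := (1/2 : ℝ≥0∞) • πy + (1/2 : ℝ≥0∞) • πy.map Φ with hπ'def
  set E : Geo X → X × X := fun γ => (geoEval 0 γ, geoEval 1 γ) with hEdef
  have hEmeas : Measurable E := measurable_geoPair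
  -- E ∘ Φ = (f × f) ∘ E
  have hEΦ : E ∘ Φ = (Prod.map f f) ∘ E := rfl
  have hfae : (f : X → X) =ᵐ[μ₀] id := by
    rw [Filter.EventuallyEq, ae_iff]
    exact hμ₀conc
  have hmapf : μ₀.map f = μ₀ := by
    rw [Measure.map_congr hfae, Measure.map_id]
  -- marginals of πy's endpoint plan
  have hπye0 : πy.map (geoEval 0) = μ₀ := by
    have : (πy.map E).map Prod.fst = μ₀ := hπycpl.1
    rwa [Measure.map_map measurable_fst hEmeas] at this
  have hπye1 : πy.map (geoEval 1) = Measure.dirac y := by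
    have : (πy.map E).map Prod.snd = Measure.dirac y := hπycpl.2
    rwa [Measure.map_map measurable_snd hEmeas] at this
  -- the plan of π'
  have hπ'planE : π'.map E =
      (1/2 : ℝ≥0∞) • πy.map E + (1/2 : ℝ≥0∞) • (πy.map E).map (Prod.map f f) := by
    rw [hπ'def, Measure.map_add _ _ hEmeas, Measure.map_smul, Measure.map_smul,
      Measure.map_map hEmeas hΦmeas, hEΦ,
      ← Measure.map_map (hfmeas.prodMap hfmeas) hEmeas]
  have hprodmeas : Measurable (Prod.map (f : X → X) f) := hfmeas.prodMap hfmeas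
  have hπ'cpl : IsCoupling (π'.map E) μ₀ μ₁ := by
    constructor
    · rw [hπ'planE, Measure.map_add _ _ measurable_fst, Measure.map_smul, Measure.map_smul,
        Measure.map_map measurable_fst hprodmeas]
      have h1 : (Prod.fst ∘ Prod.map (f : X → X) f) = (f : X → X) ∘ Prod.fst := rfl
      rw [h1, ← Measure.map_map hfmeas measurable_fst, hπycpl.1, hmapf,
        ← two_smul ℝ≥0∞ ((1/2 : ℝ≥0∞) • μ₀), smul_smul,
        show (2 : ℝ≥0∞) * (1/2) = 1 by rw [one_div]; exact ENNReal.mul_inv_cancel two_ne_zero ENNReal.ofNat_ne_top, one_smul]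
    · rw [hπ'planE, Measure.map_add _ _ measurable_snd, Measure.map_smul, Measure.map_smul,
        Measure.map_map measurable_snd hprodmeas]
      have h1 : (Prod.snd ∘ Prod.map (f : X → X) f) = (f : X → X) ∘ Prod.snd := rfl
      rw [h1, ← Measure.map_map hfmeas measurable_snd, hπycpl.2,
        Measure.map_dirac' hfmeas]
  have hπ'prob : IsProbabilityMeasure π' := by
    constructor
    have : IsProbabilityMeasure (πy.map Φ) := Measure.isProbabilityMeasure_map hΦmeas.aemeasurable
    rw [hπ'def]
    simp [measure_univ, ENNReal.inv_two_add_inv_two]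
  have hπ'opt : IsOptGeoPlan π' μ₀ μ₁ := by
    refine ⟨hπ'prob, Measure.isProbabilityMeasure_map hEmeas.aemeasurable, hπ'cpl, ?_⟩
    intro pl' hpl'prob hpl'cpl
    rw [coupling_cost_const f μ₀ y hμ₀conc _ hπ'cpl,
      coupling_cost_const f μ₀ y hμ₀conc _ hpl'cpl]
  have hπ'eq : π' = pln := huniq π' hπ'opt
  -- π' is concentrated on Γ
  have hπ'Γ : π' Γᶜ = 0 := by rw [hπ'eq]; exact hΓnull
  have hhalf : (1/2 : ℝ≥0∞) ≠ 0 := by norm_num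
  have hπyΓ : πy Γᶜ = 0 ∧ (πy.map Φ) Γᶜ = 0 := by
    rw [hπ'def] at hπ'Γ
    simp only [Measure.add_apply, Measure.smul_apply, smul_eq_mul, add_eq_zero,
      mul_eq_zero] at hπ'Γ
    exact ⟨(hπ'Γ.1.resolve_left hhalf), (hπ'Γ.2.resolve_left hhalf)⟩
  have hπyΦΓ : πy (Φ ⁻¹' Γᶜ) = 0 := by
    rw [← Measure.map_apply hΦmeas hΓmeas.compl]
    exact hπyΓ.2
  -- πy-null sets
  have hA : πy (geoEval 0 ⁻¹' Fᶜ) = 0 := by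
    rw [← Measure.map_apply (measurable_geoEval 0) hFmeas.compl, hπye0]
    exact hμ₀conc
  have hB : πy (geoEval 1 ⁻¹' ({y} : Set X)ᶜ) = 0 := by
    rw [← Measure.map_apply (measurable_geoEval 1) (measurableSet_singleton y).compl, hπye1]
    simp
  -- find a good geodesic
  have hunion : πy (geoEval 0 ⁻¹' Fᶜ ∪ geoEval 1 ⁻¹' ({y} : Set X)ᶜ ∪ Γᶜ ∪ Φ ⁻¹' Γᶜ) = 0 := by
    refine measure_union_null (measure_union_null (measure_union_null hA hB) hπyΓ.1) hπyΦΓ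
  have hne : ((geoEval 0 ⁻¹' Fᶜ ∪ geoEval 1 ⁻¹' ({y} : Set X)ᶜ ∪ Γᶜ ∪ Φ ⁻¹' Γᶜ)ᶜ :
      Set (Geo X)).Nonempty := by
    rw [Set.nonempty_iff_ne_empty]
    intro hcon
    have : (geoEval 0 ⁻¹' Fᶜ ∪ geoEval 1 ⁻¹' ({y} : Set X)ᶜ ∪ Γᶜ ∪ Φ ⁻¹' Γᶜ) = univ := by
      rw [← compl_empty_iff, hcon]
    rw [this, measure_univ] at hunion
    exact one_ne_zero hunion
  obtain ⟨γ, hγ⟩ := hne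
  simp only [mem_compl_iff, mem_union, not_or, mem_preimage, not_not,
    mem_singleton_iff] at hγ
  obtain ⟨⟨⟨hγ0, hγ1⟩, hγΓ⟩, hγΦΓ⟩ := hγ
  -- conclude
  have h0 : geoEval 0 (Φ γ) = geoEval 0 γ := by
    rw [hΦdef, geoEval_geoMap]
    exact hγ0
  have hΦγ : Φ γ = γ := hΓinj hγΦΓ hγΓ h0
  have : f y = y := by
    have := congrArg (geoEval 1) hΦγ
    rw [hΦdef, geoEval_geoMap, hγ1] at this
    exact this
  exact hy this
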